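/- arXiv:2302.11731 — 2 statements merged into one kernel-verified Lean document; each statement's English description precedes it below -/
import Mathlib

section
/- Let n ≥ 2 and σ ∈ ℝⁿ with σ₁ > 0 and √3·σ₁ > √(σ₂² + ⋯ + σₙ²). With M the matrix with M₁₁ = 3σ₁, M₁ⱼ = Mⱼ₁ = σⱼ (j ≥ 2), Mⱼⱼ = σ₁ (j ≥ 2), zero otherwise, there exist constants 0 < c₁ ≤ c₂ such that c₁|x|² ≤ xᵀMx ≤ c₂|x|² for all x ∈ ℝⁿ. -/
open Matrix

private lemma zk_aux (a s2 : ℝ) (ha : 0 < a) (hs2nn : 0 ≤ s2) (hs2lt : s2 < 3 * a ^ 2) :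
    ∃ c₁ c₂ : ℝ, 0 < c₁ ∧ c₁ ≤ c₂ ∧ ∀ x0 P t : ℝ, 0 ≤ t → P ^ 2 ≤ s2 * t →
      c₁ * (x0 ^ 2 + t) ≤ 3 * a * x0 ^ 2 + 2 * x0 * P + a * t ∧
      3 * a * x0 ^ 2 + 2 * x0 * P + a * t ≤ c₂ * (x0 ^ 2 + t) := by
  obtain ⟨c, hcpos, hclt, hc4⟩ : ∃ c : ℝ, 0 < c ∧ c < a ∧ c * (4 * a) = 3 * a ^ 2 - s2 :=
    ⟨(3 * a ^ 2 - s2) / (4 * a), div_pos (by linarith) (by linarith),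
      by rw [div_lt_iff₀ (by linarith)]; nlinarith,
      div_mul_cancel₀ _ (by positivity)⟩
  obtain ⟨d, hd4, hdge⟩ : ∃ d : ℝ, a * d = 4 * a ^ 2 + s2 ∧ a ≤ d :=
    ⟨4 * a + s2 / a, by field_simp, by nlinarith [div_nonneg hs2nn ha.le]⟩
  refine ⟨c, d, hcpos, by linarith, fun x0 P t ht hCS => ⟨?_, ?_⟩⟩
  · have hA : 0 < 3 * a - c := by linarith
    have hAB : s2 ≤ (3 * a - c) * (a - c) := by nlinarith
    nlinarith [sq_nonneg ((3 * a - c) * x0 + P), mul_nonneg (sub_nonneg.mpr hAB) ht, hCS, hA]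
  · have key : a * (3 * a * x0 ^ 2 + 2 * x0 * P + a * t) ≤ (4 * a ^ 2 + s2) * (x0 ^ 2 + t) := by
      nlinarith [sq_nonneg (a * x0 - P), hCS, mul_nonneg hs2nn (sq_nonneg x0),
        mul_nonneg (sq_nonneg a) ht]
    have hds : a * (d * (x0 ^ 2 + t)) = (4 * a ^ 2 + s2) * (x0 ^ 2 + t) := by
      rw [← hd4]; ring
    exact le_of_mul_le_mul_left (by linarith) ha


/-- The quadratic form `xᵀ M x` associated to the ZK energy-estimate matrix `M` is
equivalent to `|x|²`: there are `0 < c₁ ≤ c₂` with `c₁|x|² ≤ xᵀMx ≤ c₂|x|²`. -/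
theorem stmt_1 (n : ℕ) (hn : 2 ≤ n) (σ : Fin n → ℝ)
    (hσ1 : 0 < σ ⟨0, by omega⟩)
    (hσ : Real.sqrt 3 * σ ⟨0, by omega⟩ >
      Real.sqrt (∑ j ∈ Finset.univ.filter (fun j : Fin n => j ≠ ⟨0, by omega⟩), σ j ^ 2))
    (M : Matrix (Fin n) (Fin n) ℝ)
    (hM : ∀ i j : Fin n,
      M i j =
        if i = ⟨0, by omega⟩ ∧ j = ⟨0, by omega⟩ then 3 * σ ⟨0, by omega⟩
        else if i = ⟨0, by omega⟩ then σ j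
        else if j = ⟨0, by omega⟩ then σ i
        else if i = j then σ ⟨0, by omega⟩
        else 0) :
    ∃ c₁ c₂ : ℝ, 0 < c₁ ∧ c₁ ≤ c₂ ∧
      ∀ x : Fin n → ℝ,
        c₁ * (∑ i, x i ^ 2) ≤ x ⬝ᵥ M.mulVec x ∧
        x ⬝ᵥ M.mulVec x ≤ c₂ * (∑ i, x i ^ 2) := by
  classical
  set e : Fin n := ⟨0, by omega⟩ with he
  have ha : 0 < σ e := hσ1
  set a : ℝ := σ e with hadef
  have hfilter : (Finset.univ.filter (fun j : Fin n => j ≠ e)) = Finset.univ.erase e :=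
    Finset.filter_ne' _ _
  rw [hfilter] at hσ
  set s2 : ℝ := ∑ j ∈ Finset.univ.erase e, σ j ^ 2 with hs2def
  have hs2nn : 0 ≤ s2 := Finset.sum_nonneg fun j _ => sq_nonneg _
  have hs2lt : s2 < 3 * a ^ 2 := by
    nlinarith [Real.sq_sqrt hs2nn, Real.sq_sqrt (show (0:ℝ) ≤ 3 by norm_num),
      Real.sqrt_nonneg s2, Real.sqrt_nonneg (3:ℝ), hσ, ha]
  obtain ⟨c₁, c₂, hc1pos, hc12, hbound⟩ := zk_aux a s2 ha hs2nn hs2lt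
  refine ⟨c₁, c₂, hc1pos, hc12, ?_⟩
  intro x
  set P : ℝ := ∑ j ∈ Finset.univ.erase e, σ j * x j with hPdef
  set t : ℝ := ∑ j ∈ Finset.univ.erase e, x j ^ 2 with htdef
  have htnn : 0 ≤ t := Finset.sum_nonneg fun j _ => sq_nonneg _
  have hCS : P ^ 2 ≤ s2 * t := by
    rw [hPdef, hs2def, htdef]
    exact Finset.sum_mul_sq_le_sq_mul_sq _ _ _
  have hrow : ∀ i : Fin n,
      M.mulVec x i = if i = e then 3 * a * x e + P else σ i * x e + a * x i := by
    intro i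
    by_cases hi : i = e
    · subst hi
      rw [if_pos rfl]
      show ∑ j, M e j * x j = _
      rw [← Finset.add_sum_erase _ _ (Finset.mem_univ e)]
      rw [hM e e, if_pos ⟨rfl, rfl⟩]
      congr 1
      rw [hPdef]
      refine Finset.sum_congr rfl fun j hj => ?_
      have hj' : j ≠ e := (Finset.mem_erase.mp hj).1
      rw [hM e j]
      simp [hj']
    · rw [if_neg hi]
      show ∑ j, M i j * x j = _
      rw [← Finset.add_sum_erase _ _ (Finset.mem_univ e)]
      rw [hM i e]
      simp only [hi, false_and, if_false, if_pos rfl]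
      congr 1
      have : ∀ j ∈ Finset.univ.erase e, M i j * x j = if i = j then a * x j else 0 := by
        intro j hj
        have hj' : j ≠ e := (Finset.mem_erase.mp hj).1
        rw [hM i j]
        by_cases hij : i = j
        · simp [hi, hj', hij]
        · simp [hi, hj', hij]
      rw [Finset.sum_congr rfl this, Finset.sum_ite_eq]
      simp [hi]
  have hQ : x ⬝ᵥ M.mulVec x = 3 * a * x e ^ 2 + 2 * x e * P + a * t := by
    show ∑ i, x i * M.mulVec x i = _
    rw [← Finset.add_sum_erase _ _ (Finset.mem_univ e), hrow e, if_pos rfl]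
    have h2 : ∑ i ∈ Finset.univ.erase e, x i * M.mulVec x i
        = ∑ i ∈ Finset.univ.erase e, (x e * (σ i * x i) + a * x i ^ 2) := by
      refine Finset.sum_congr rfl fun i hi => ?_
      have hi' : i ≠ e := (Finset.mem_erase.mp hi).1
      rw [hrow i, if_neg hi']
      ring
    rw [h2, Finset.sum_add_distrib, ← Finset.mul_sum, ← Finset.mul_sum, ← hPdef, ← htdef]
    ring
  have hsum : ∑ i, x i ^ 2 = x e ^ 2 + t := by
    rw [← Finset.add_sum_erase _ _ (Finset.mem_univ e), ← htdef]
  rw [hQ, hsum]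
  exact hbound (x e) P t htnn hCS
end

section
/- For b > 0, η > 0, with p_η(x) = e^{2bx}(1 + ηe^{2bx})^{-1} and ρ_η(x) = e^{bx}(1 + ηe^{2bx})^{-1}, one has |p_η''(x)| ≤ 4b²·ρ_η(x)² for all x ∈ ℝ. -/
/-- For `p_η(x) = e^{2bx}(1 + ηe^{2bx})⁻¹` and `ρ_η(x) = e^{bx}(1 + ηe^{2bx})⁻¹`
one has `|p_η''(x)| ≤ 4b² ρ_η(x)²`. -/
theorem stmt_4 (b η : ℝ) (hb : 0 < b) (hη : 0 < η) (x : ℝ) :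
    |deriv (deriv (fun y => Real.exp (2 * b * y) / (1 + η * Real.exp (2 * b * y)))) x| ≤
      4 * b ^ 2 * (Real.exp (b * x) / (1 + η * Real.exp (2 * b * x))) ^ 2 := by
  have hexp : ∀ y : ℝ, HasDerivAt (fun z => Real.exp (2 * b * z))
      (2 * b * Real.exp (2 * b * y)) y := by
    intro y
    have h := ((hasDerivAt_id y).const_mul (2 * b)).exp
    convert h using 1
    simp [mul_comm]
    simp only [mul_one]; exact mul_comm _ _
  have hv : ∀ y : ℝ, (0 : ℝ) < 1 + η * Real.exp (2 * b * y) := fun y => by positivity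
  have hd1 : ∀ y : ℝ, HasDerivAt (fun z => Real.exp (2 * b * z) / (1 + η * Real.exp (2 * b * z)))
      (2 * b * Real.exp (2 * b * y) / (1 + η * Real.exp (2 * b * y)) ^ 2) y := by
    intro y
    have h := (hexp y).div ((hasDerivAt_const y (1 : ℝ)).add ((hexp y).const_mul η)) (hv y).ne'
    convert h using 1
    · rfl
    · rfl
    · rfl
    simp only [Pi.add_apply]
    field_simp
    ring
  have hderiv1 : deriv (fun z => Real.exp (2 * b * z) / (1 + η * Real.exp (2 * b * z)))
      = fun y => 2 * b * Real.exp (2 * b * y) / (1 + η * Real.exp (2 * b * y)) ^ 2 :=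
    funext fun y => (hd1 y).deriv
  rw [hderiv1]
  have hd2 : HasDerivAt (fun y => 2 * b * Real.exp (2 * b * y) / (1 + η * Real.exp (2 * b * y)) ^ 2)
      (4 * b ^ 2 * Real.exp (2 * b * x) * (1 - η * Real.exp (2 * b * x)) /
        (1 + η * Real.exp (2 * b * x)) ^ 3) x := by
    have hnum : HasDerivAt (fun y => 2 * b * Real.exp (2 * b * y))
        (2 * b * (2 * b * Real.exp (2 * b * x))) x := (hexp x).const_mul (2 * b)
    have hden := ((hasDerivAt_const x (1 : ℝ)).add ((hexp x).const_mul η)).pow 2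
    have h := hnum.div hden (pow_ne_zero 2 (hv x).ne')
    convert h using 1
    have hvx := (hv x).ne'
    · rfl
    · rfl
    · rfl
    simp only [Pi.add_apply, Pi.pow_apply]
    field_simp
    ring
  rw [hd2.deriv]
  set u := Real.exp (2 * b * x) with hu
  have hupos : 0 < u := Real.exp_pos _
  have hvx : (0 : ℝ) < 1 + η * u := hv x
  have hsq : Real.exp (b * x) ^ 2 = u := by
    rw [sq, ← Real.exp_add, hu]; ring_nf
  have habs : |1 - η * u| ≤ 1 + η * u := by
    rw [abs_le]; constructor <;> nlinarith
  have hLHS : |4 * b ^ 2 * u * (1 - η * u) / (1 + η * u) ^ 3|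
      = 4 * b ^ 2 * u * |1 - η * u| / (1 + η * u) ^ 3 := by
    rw [abs_div, abs_mul, abs_of_pos (by positivity : (0:ℝ) < 4 * b ^ 2 * u),
      abs_of_pos (by positivity : (0:ℝ) < (1 + η * u) ^ 3)]
  rw [hLHS, div_pow, hsq, ← mul_div_assoc]
  rw [div_le_div_iff₀ (by positivity) (by positivity)]
  calc 4 * b ^ 2 * u * |1 - η * u| * (1 + η * u) ^ 2
      ≤ 4 * b ^ 2 * u * (1 + η * u) * (1 + η * u) ^ 2 := by gcongr
    _ = 4 * b ^ 2 * u * (1 + η * u) ^ 3 := by ring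
end
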